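/- Let φ : Ω → V be strongly measurable, and let t ≥ 0 be such that ∫₀^ℓ μ(t+s)‖φ(s)‖_V ds < ∞. Then the map τ ↦ ∫₀^ℓ (−μ'(τ+s))‖φ(s)‖_V ds belongs to L¹((t,∞)), and the identity ∫₀^ℓ μ(t+s) φ(s) ds = −∫_t^ℓ ( ∫₀^ℓ μ'(τ+s) φ(s) ds ) dτ holds in V. -/

import Mathlib

open MeasureTheory Set Filter

/-- Lemma `CRUCIAL`. Let `μ` be extended by `0` outside `Ω`, with
a.e. derivative `μ' ≤ 0` (FTC form). If `φ : Ω → V` is strongly measurable and `t ≥ 0`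
satisfies `∫₀^ℓ μ(t+s)‖φ(s)‖ ds < ∞`, then `τ ↦ ∫₀^ℓ (−μ'(τ+s))‖φ(s)‖ ds ∈ L¹((t,∞))`
and `∫₀^ℓ μ(t+s) φ(s) ds = −∫_t^ℓ (∫₀^ℓ μ'(τ+s) φ(s) ds) dτ` in `V`. -/
theorem stmt9
    {V : Type*} [NormedAddCommGroup V] [InnerProductSpace ℝ V] [CompleteSpace V]
    (ℓ : EReal) (hℓ : 0 < ℓ)
    (Ω : Set ℝ) (hΩ : Ω = {s : ℝ | 0 < s ∧ (s : EReal) < ℓ})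
    (μ μ' : ℝ → ℝ)
    (hμpos : ∀ s ∈ Ω, 0 < μ s)
    (hμzero : ∀ s : ℝ, 0 < s → s ∉ Ω → μ s = 0)
    (hμmono : AntitoneOn μ (Ioi 0))
    (hμint : IntegrableOn μ (Ioi 0))
    (hμ'loc : ∀ a b : ℝ, 0 < a → IntegrableOn μ' (Icc a b))
    (hμ'le : ∀ᵐ s ∂(volume.restrict (Ioi 0)), μ' s ≤ 0)
    (hFTC : ∀ a b : ℝ, 0 < a → a ≤ b → μ b = μ a + ∫ x in a..b, μ' x)
    (φ : ℝ → V)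
    (hφmeas : AEStronglyMeasurable φ (volume.restrict Ω))
    (t : ℝ) (ht : 0 ≤ t)
    (hφint : IntegrableOn (fun s => μ (t + s) * ‖φ s‖) Ω) :
    IntegrableOn (fun τ => ∫ s in Ω, -μ' (τ + s) * ‖φ s‖) (Ioi t) ∧
      (∀ᵐ τ ∂(volume.restrict (Ioi t)), IntegrableOn (fun s => μ' (τ + s) • φ s) Ω) ∧
      (∫ s in Ω, μ (t + s) • φ s) =
        -∫ τ in {τ : ℝ | t < τ ∧ (τ : EReal) < ℓ}, ∫ s in Ω, μ' (τ + s) • φ s := by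
  -- basic sets
  have hΩsub : Ω ⊆ Ioi 0 := by rw [hΩ]; exact fun s hs => hs.1
  have hΩmeas : MeasurableSet Ω := by
    rw [hΩ]
    exact measurableSet_Ioi.inter (measurable_coe_real_ereal measurableSet_Iio)
  set A : Set ℝ := {τ : ℝ | t < τ ∧ (τ : EReal) < ℓ} with hAdef
  have hAmeas : MeasurableSet A :=
    measurableSet_Ioi.inter (measurable_coe_real_ereal measurableSet_Iio)
  have hAsub : A ⊆ Ioi t := fun τ hτ => hτ.1
  -- μ' is a.e. strongly measurable on (0,∞)
  have hμ'meas : AEStronglyMeasurable μ' (volume.restrict (Ioi 0)) := by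
    have hU : Ioi (0:ℝ) = ⋃ n : ℕ, Icc (1/(n+1) : ℝ) (n+1) := by
      ext x
      simp only [mem_Ioi, mem_iUnion, mem_Icc]
      constructor
      · intro hx
        obtain ⟨n, hn⟩ := exists_nat_ge (max (1/x) x)
        refine ⟨n, ?_, ?_⟩
        · have h1 : 1/x ≤ (n:ℝ) + 1 := le_trans (le_max_left _ _) (by linarith)
          rw [div_le_iff₀ hx] at h1
          rw [div_le_iff₀ (by positivity)]
          nlinarith
        · exact le_trans (le_max_right _ _) (by linarith)
      · rintro ⟨n, h1, _⟩
        exact lt_of_lt_of_le (by positivity) h1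
    rw [hU, aestronglyMeasurable_iUnion_iff]
    exact fun n => (hμ'loc _ _ (by positivity)).aestronglyMeasurable
  set ψ : ℝ → ℝ := hμ'meas.mk μ' with hψdef
  have hψsm : StronglyMeasurable ψ := hμ'meas.stronglyMeasurable_mk
  set ρ : ℝ → ℝ := fun x => |ψ x| with hρdef
  have hρmeas : Measurable ρ := hψsm.measurable.abs
  have hρnn : ∀ x, 0 ≤ ρ x := fun x => abs_nonneg _
  have hae : ∀ᵐ x ∂(volume.restrict (Ioi 0)), μ' x = -ρ x := by
    filter_upwards [hμ'meas.ae_eq_mk, hμ'le] with x h1 h2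
    have h1' : ψ x = μ' x := h1.symm
    rw [hρdef]
    simp only
    rw [← h1', abs_of_nonpos (by rw [h1']; exact h2), neg_neg]
  have haev : ∀ᵐ x ∂(volume : Measure ℝ), x ∈ Ioi 0 → μ' x = -ρ x :=
    (ae_restrict_iff' measurableSet_Ioi).1 hae
  -- shift a.e. statements
  have shift : ∀ (p : ℝ → Prop), (∀ᵐ x ∂(volume : Measure ℝ), p x) →
      ∀ τ : ℝ, ∀ᵐ s ∂(volume : Measure ℝ), p (τ + s) := fun p hp τ =>
    (measurePreserving_add_left volume τ).quasiMeasurePreserving.ae hp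
  have key : ∀ τ : ℝ, 0 ≤ τ → ∀ᵐ s ∂(volume.restrict Ω), μ' (τ + s) = -ρ (τ + s) := by
    intro τ hτ
    rw [ae_restrict_iff' hΩmeas]
    filter_upwards [shift _ haev τ] with s hs hsΩ
    exact hs (mem_Ioi.2 (add_pos_of_nonneg_of_pos hτ (hΩsub hsΩ)))
  -- measurable representative of φ
  set φ₀ : ℝ → V := hφmeas.mk φ with hφ₀def
  have hφ₀sm : StronglyMeasurable φ₀ := hφmeas.stronglyMeasurable_mk
  have hφae : φ =ᵐ[volume.restrict Ω] φ₀ := hφmeas.ae_eq_mk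
  -- μ nonneg on (0,∞)
  have hμnn : ∀ x : ℝ, 0 < x → 0 ≤ μ x := by
    intro x hx
    by_cases h : x ∈ Ω
    · exact (hμpos x h).le
    · exact (hμzero x hx h).ge
  -- μ tends to 0 at ∞
  have hμtendsto : Tendsto μ atTop (nhds 0) := by
    set C := ∫ y in Ioi (0:ℝ), μ y with hC
    have hbound : ∀ x : ℝ, 0 < x → μ x * (x / 2) ≤ C := by
      intro x hx
      have hsub : Ioc (x/2) x ⊆ Ioi (0:ℝ) := fun y hy => mem_Ioi.2 (lt_trans (by linarith) hy.1)
      have h1 : ∫ _ in Ioc (x/2) x, μ x ∂volume = μ x * (x/2) := by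
        rw [setIntegral_const, Measure.real, Real.volume_Ioc, ENNReal.toReal_ofReal (by linarith),
          smul_eq_mul]
        ring
      have h2 : ∫ _ in Ioc (x/2) x, μ x ∂volume ≤ ∫ y in Ioc (x/2) x, μ y ∂volume := by
        apply setIntegral_mono_on
        · exact integrableOn_const (by rw [Real.volume_Ioc]; exact ENNReal.ofReal_ne_top)
        · exact hμint.mono_set hsub
        · exact measurableSet_Ioc
        · exact fun y hy => hμmono (hsub hy) (mem_Ioi.2 hx) hy.2
      have h3 : ∫ y in Ioc (x/2) x, μ y ∂volume ≤ C := by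
        apply setIntegral_mono_set hμint
        · exact (ae_restrict_iff' measurableSet_Ioi).2
            (Eventually.of_forall fun y hy => hμnn y hy)
        · exact HasSubset.Subset.eventuallyLE hsub
      linarith [h1 ▸ h2]
    have h0 : ∀ᶠ x in (atTop : Filter ℝ), (0:ℝ) ≤ μ x :=
      eventually_atTop.2 ⟨1, fun x hx => hμnn x (by linarith)⟩
    have hub : ∀ᶠ x in (atTop : Filter ℝ), μ x ≤ 2 * C / x := by
      filter_upwards [eventually_gt_atTop (0:ℝ)] with x hx
      have := hbound x hx
      rw [le_div_iff₀ hx]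
      nlinarith
    have hlim : Tendsto (fun x : ℝ => 2 * C / x) atTop (nhds 0) :=
      Tendsto.div_atTop tendsto_const_nhds tendsto_id
    exact tendsto_of_tendsto_of_tendsto_of_le_of_le' tendsto_const_nhds hlim h0 hub
  -- ρ integrable on Ioc a b for 0 < a
  have hρint : ∀ a b : ℝ, 0 < a → IntegrableOn ρ (Ioc a b) := by
    intro a b ha
    have hcongr : ∀ᵐ y ∂(volume.restrict (Ioc a b)), -μ' y = ρ y := by
      filter_upwards [ae_restrict_of_ae haev, ae_restrict_mem measurableSet_Ioc] with y h1 h2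
      rw [h1 (mem_Ioi.2 (lt_of_lt_of_le ha h2.1.le))]
      ring
    exact (((hμ'loc a b ha).mono_set Ioc_subset_Icc_self).neg).congr hcongr
  -- FTC consequence on Ioc
  have hIoc : ∀ a b : ℝ, 0 < a → a ≤ b → ∫ y in Ioc a b, ρ y = μ a - μ b := by
    intro a b ha hab
    have h1 : μ b = μ a + ∫ x in a..b, μ' x := hFTC a b ha hab
    rw [intervalIntegral.integral_of_le hab] at h1
    have h3 : ∫ y in Ioc a b, μ' y = ∫ y in Ioc a b, -ρ y := by
      apply setIntegral_congr_ae measurableSet_Ioc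
      filter_upwards [haev] with y hy hymem
      exact hy (mem_Ioi.2 (lt_of_lt_of_le ha hymem.1.le))
    rw [h3, integral_neg] at h1
    linarith
  -- the key lintegral identity
  have hkey : ∀ x : ℝ, 0 < x →
      ∫⁻ τ in Ioi x, ENNReal.ofReal (ρ τ) = ENNReal.ofReal (μ x) := by
    intro a ha
    set ν : Measure ℝ := volume.withDensity (fun x => ENNReal.ofReal (ρ x)) with hν
    have hν_apply : ∀ s : Set ℝ, MeasurableSet s →
        ν s = ∫⁻ τ in s, ENNReal.ofReal (ρ τ) := fun s hs => withDensity_apply _ hs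
    have hmono : Monotone (fun n : ℕ => Ioc a (a + n)) := fun m n hmn =>
      Ioc_subset_Ioc le_rfl (by exact_mod_cast add_le_add_right (Nat.cast_le.2 hmn) a)
    have hunion : ⋃ n : ℕ, Ioc a (a + (n:ℝ)) = Ioi a := by
      ext x
      simp only [mem_iUnion, mem_Ioc, mem_Ioi]
      constructor
      · rintro ⟨n, h1, _⟩; exact h1
      · intro hx
        obtain ⟨n, hn⟩ := exists_nat_ge (x - a)
        exact ⟨n, hx, by linarith⟩
    have htend : Tendsto (fun n : ℕ => ν (Ioc a (a + n))) atTop (nhds (ν (Ioi a))) := by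
      rw [← hunion]
      exact tendsto_measure_iUnion_atTop hmono
    have heval : ∀ n : ℕ, ν (Ioc a (a + n)) = ENNReal.ofReal (μ a - μ (a + n)) := by
      intro n
      rw [hν_apply _ measurableSet_Ioc,
        ← ofReal_integral_eq_lintegral_ofReal (hρint a (a+n) ha)
          (Eventually.of_forall fun y => hρnn y),
        hIoc a (a+n) ha (by linarith [Nat.cast_nonneg (α := ℝ) n])]
    have htend2 : Tendsto (fun n : ℕ => ν (Ioc a (a + n))) atTop
        (nhds (ENNReal.ofReal (μ a))) := by
      simp only [heval]
      have h1 : Tendsto (fun n : ℕ => μ (a + n)) atTop (nhds 0) :=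
        hμtendsto.comp (tendsto_atTop_add_const_left _ a tendsto_natCast_atTop_atTop)
      have h2 : Tendsto (fun n : ℕ => μ a - μ (a + n)) atTop (nhds (μ a - 0)) :=
        tendsto_const_nhds.sub h1
      rw [sub_zero] at h2
      exact (ENNReal.continuous_ofReal.continuousAt.tendsto).comp h2
    rw [← hν_apply _ measurableSet_Ioi]
    exact tendsto_nhds_unique htend htend2
  -- translated key identity
  have hD : ∀ s : ℝ, s ∈ Ω →
      ∫⁻ τ in Ioi t, ENNReal.ofReal (ρ (τ + s)) = ENNReal.ofReal (μ (t + s)) := by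
    intro s hs
    have h0 : (0:ℝ) < t + s := add_pos_of_nonneg_of_pos ht (hΩsub hs)
    have hpre : (fun x : ℝ => x + s) ⁻¹' (Ioi (t+s)) = Ioi t := by
      ext x
      simp only [mem_preimage, mem_Ioi]
      constructor <;> intro h <;> linarith
    have := (measurePreserving_add_right volume s).setLIntegral_comp_preimage_emb
      (measurableEmbedding_addRight s) (fun x => ENNReal.ofReal (ρ x)) (Ioi (t+s))
    rw [hpre] at this
    calc ∫⁻ τ in Ioi t, ENNReal.ofReal (ρ (τ + s)) = ∫⁻ y in Ioi (t+s), ENNReal.ofReal (ρ y) := this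
    _ = ENNReal.ofReal (μ (t + s)) := hkey (t+s) h0
  -- Tonelli setup
  set H : ℝ → ℝ → ENNReal := fun τ s => ENNReal.ofReal (ρ (τ + s)) * ENNReal.ofReal ‖φ₀ s‖ with hHdef
  have hprodmeas : Measurable (fun p : ℝ × ℝ => H p.1 p.2) := by
    show Measurable fun p : ℝ × ℝ => ENNReal.ofReal (ρ (p.1 + p.2)) * ENNReal.ofReal ‖φ₀ p.2‖
    refine Measurable.mul (f := fun p : ℝ × ℝ => ENNReal.ofReal (ρ (p.1 + p.2))) (g := fun p : ℝ × ℝ => ENNReal.ofReal ‖φ₀ p.2‖) ?_ ?_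
    · exact (hρmeas.comp (measurable_fst.add measurable_snd)).ennreal_ofReal
    · exact ((hφ₀sm.norm.measurable).comp measurable_snd).ennreal_ofReal
  have hinnermeas : Measurable (fun τ => ∫⁻ s in Ω, H τ s) :=
    Measurable.lintegral_prod_right' (f := fun p : ℝ × ℝ => H p.1 p.2) hprodmeas
  have hiter : ∀ s ∈ Ω, ∫⁻ τ in Ioi t, H τ s
      = ENNReal.ofReal (μ (t+s)) * ENNReal.ofReal ‖φ₀ s‖ := by
    intro s hs
    rw [hHdef]
    simp only
    rw [lintegral_mul_const _ ((show Measurable fun τ : ℝ => ρ (τ + s) from hρmeas.comp (measurable_id.add_const s)).ennreal_ofReal),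
      hD s hs]
  have hfin : ∫⁻ s in Ω, ENNReal.ofReal (μ (t+s)) * ENNReal.ofReal ‖φ₀ s‖ < ⊤ := by
    have h1 : ∀ᵐ s ∂(volume.restrict Ω),
        ENNReal.ofReal (μ (t+s)) * ENNReal.ofReal ‖φ₀ s‖ = ↑‖μ (t + s) * ‖φ s‖‖₊ := by
      filter_upwards [hφae, ae_restrict_mem hΩmeas] with s h1 h2
      rw [← h1, ← ENNReal.ofReal_mul (hμnn _ (add_pos_of_nonneg_of_pos ht (hΩsub h2)))]
      rw [← Real.enorm_eq_ofReal (mul_nonneg (hμnn _ (add_pos_of_nonneg_of_pos ht (hΩsub h2))) (norm_nonneg _))]; rfl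
    rw [lintegral_congr_ae h1]
    exact hφint.2
  have hdouble : ∫⁻ τ in Ioi t, ∫⁻ s in Ω, H τ s < ⊤ := by
    rw [lintegral_lintegral_swap hprodmeas.aemeasurable]
    calc ∫⁻ s in Ω, ∫⁻ τ in Ioi t, H τ s
        = ∫⁻ s in Ω, ENNReal.ofReal (μ (t+s)) * ENNReal.ofReal ‖φ₀ s‖ :=
          setLIntegral_congr_fun hΩmeas hiter
      _ < ⊤ := hfin
  -- Goal 1
  have hFeq : ∀ τ : ℝ, (∫ s in Ω, ρ (τ + s) * ‖φ₀ s‖) = (∫⁻ s in Ω, H τ s).toReal := by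
    intro τ
    rw [integral_eq_lintegral_of_nonneg_ae
      (Eventually.of_forall fun s => mul_nonneg (hρnn _) (norm_nonneg _))
      (((show Measurable fun s : ℝ => ρ (τ + s) from hρmeas.comp (measurable_const.add measurable_id)).mul hφ₀sm.norm.measurable).aestronglyMeasurable)]
    congr 1
    apply lintegral_congr fun s => ?_
    rw [ENNReal.ofReal_mul (hρnn _), hHdef]
  have hG2 : IntegrableOn (fun τ => (∫⁻ s in Ω, H τ s).toReal) (Ioi t) := by
    constructor
    · exact hinnermeas.ennreal_toReal.aestronglyMeasurable
    · refine lt_of_le_of_lt (lintegral_mono fun τ => ?_) hdouble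
      calc (‖(∫⁻ s in Ω, H τ s).toReal‖₊ : ENNReal)
          = ENNReal.ofReal ((∫⁻ s in Ω, H τ s).toReal) :=
            (Real.enorm_eq_ofReal ENNReal.toReal_nonneg)
        _ ≤ ∫⁻ s in Ω, H τ s := ENNReal.ofReal_toReal_le
  have goal1 : IntegrableOn (fun τ => ∫ s in Ω, -μ' (τ + s) * ‖φ s‖) (Ioi t) := by
    apply hG2.congr
    refine (ae_restrict_iff' measurableSet_Ioi).2 (Eventually.of_forall fun τ hτ => ?_)
    show (∫⁻ s in Ω, H τ s).toReal = ∫ s in Ω, -μ' (τ + s) * ‖φ s‖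
    rw [← hFeq τ]
    apply integral_congr_ae
    filter_upwards [key τ (le_trans ht (le_of_lt hτ)), hφae] with s h1 h2
    rw [h1, h2]
    ring
  -- Goal 2
  have hae_fin : ∀ᵐ τ ∂(volume.restrict (Ioi t)), ∫⁻ s in Ω, H τ s < ⊤ :=
    ae_lt_top hinnermeas hdouble.ne
  have goal2 : ∀ᵐ τ ∂(volume.restrict (Ioi t)),
      IntegrableOn (fun s => μ' (τ + s) • φ s) Ω := by
    filter_upwards [hae_fin, ae_restrict_mem measurableSet_Ioi] with τ hτfin hτ
    have hτ0 : (0:ℝ) ≤ τ := le_trans ht (le_of_lt hτ)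
    have hint0 : Integrable (fun s => (-ρ (τ + s)) • φ₀ s) (volume.restrict Ω) := by
      constructor
      · exact (((show Measurable fun s : ℝ => -ρ (τ + s) from
            (hρmeas.comp (measurable_const.add measurable_id)).neg).stronglyMeasurable).smul
          hφ₀sm).aestronglyMeasurable
      · have heq : ∀ s : ℝ, (‖(-ρ (τ + s)) • φ₀ s‖₊ : ENNReal) = H τ s := by
          intro s
          rw [nnnorm_smul, ENNReal.coe_mul, hHdef]
          congr 1
          · rw [nnnorm_neg, ← Real.enorm_eq_ofReal (hρnn _)]; rfl
          · exact (ofReal_norm _).symm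
        calc ∫⁻ s in Ω, ↑‖(-ρ (τ + s)) • φ₀ s‖₊ = ∫⁻ s in Ω, H τ s :=
              lintegral_congr fun s => heq s
          _ < ⊤ := hτfin
    apply hint0.congr
    filter_upwards [key τ hτ0, hφae] with s h1 h2
    rw [h1, h2]
  -- Goal 3
  have hkmeas : StronglyMeasurable (fun p : ℝ × ℝ => ρ (p.1 + p.2) • φ₀ p.2) :=
    ((hρmeas.comp (measurable_fst.add measurable_snd)).stronglyMeasurable).smul
      (hφ₀sm.comp_measurable measurable_snd)
  have hkint : Integrable (Function.uncurry (fun τ s => ρ (τ + s) • φ₀ s))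
      ((volume.restrict (Ioi t)).prod (volume.restrict Ω)) := by
    constructor
    · exact hkmeas.aestronglyMeasurable
    · have heq : ∀ p : ℝ × ℝ, (‖ρ (p.1 + p.2) • φ₀ p.2‖₊ : ENNReal) = H p.1 p.2 := by
        intro p
        rw [nnnorm_smul, ENNReal.coe_mul, hHdef]
        congr 1
        · rw [← Real.enorm_eq_ofReal (hρnn _)]; rfl
        · exact (ofReal_norm _).symm
      show (∫⁻ p : ℝ × ℝ, (‖ρ (p.1 + p.2) • φ₀ p.2‖₊ : ENNReal)
          ∂((volume.restrict (Ioi t)).prod (volume.restrict Ω))) < ⊤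
      have : ∫⁻ p : ℝ × ℝ, (‖ρ (p.1 + p.2) • φ₀ p.2‖₊ : ENNReal)
          ∂((volume.restrict (Ioi t)).prod (volume.restrict Ω))
          = ∫⁻ τ in Ioi t, ∫⁻ s in Ω, H τ s := by
        rw [lintegral_prod (f := fun p : ℝ × ℝ => (‖ρ (p.1 + p.2) • φ₀ p.2‖₊ : ENNReal)) hkmeas.enorm.aemeasurable]
        apply lintegral_congr fun τ => ?_
        exact lintegral_congr fun s => heq (τ, s)
      exact lt_of_le_of_lt (le_of_eq this) hdouble
  have hswapB := integral_integral_swap hkint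
  have hinner_s : ∀ s ∈ Ω, (∫ τ in Ioi t, ρ (τ + s) • φ₀ s) = μ (t + s) • φ₀ s := by
    intro s hs
    rw [integral_smul_const]
    congr 1
    rw [integral_eq_lintegral_of_nonneg_ae (Eventually.of_forall fun τ => hρnn _)
      ((show Measurable fun τ : ℝ => ρ (τ + s) from hρmeas.comp (measurable_id.add_const s)).aestronglyMeasurable)]
    rw [hD s hs]
    exact ENNReal.toReal_ofReal (hμnn _ (add_pos_of_nonneg_of_pos ht (hΩsub hs)))
  have hLHS : (∫ s in Ω, μ (t + s) • φ s) = ∫ τ in Ioi t, ∫ s in Ω, ρ (τ + s) • φ₀ s := by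
    rw [hswapB]
    calc ∫ s in Ω, μ (t + s) • φ s = ∫ s in Ω, μ (t + s) • φ₀ s := by
          apply integral_congr_ae
          filter_upwards [hφae] with s h1
          rw [h1]
      _ = ∫ s in Ω, ∫ τ in Ioi t, ρ (τ + s) • φ₀ s :=
          (setIntegral_congr_fun hΩmeas fun s hs => (hinner_s s hs).symm)
  have hneg : ∀ τ : ℝ, t < τ →
      (∫ s in Ω, ρ (τ + s) • φ₀ s) = -∫ s in Ω, μ' (τ + s) • φ s := by
    intro τ hτ
    rw [← integral_neg]
    apply integral_congr_ae
    filter_upwards [key τ (le_trans ht hτ.le), hφae] with s h1 h2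
    rw [h1, h2, neg_smul, neg_neg]
  have hvanish : ∀ τ ∈ Ioi t \ A, (∫ s in Ω, μ' (τ + s) • φ s) = 0 := by
    rintro τ ⟨hτt, hτA⟩
    have hτt' : t < τ := hτt
    have hnlt : ¬ ((τ : EReal) < ℓ) := fun h => hτA ⟨hτt', h⟩
    have hℓle : ℓ ≤ (τ : EReal) := not_lt.1 hnlt
    have hℓtop : ℓ ≠ ⊤ := fun h => absurd (h ▸ hℓle) (not_le.2 (EReal.coe_lt_top τ))
    have hℓbot : ℓ ≠ ⊥ := fun h => by rw [h] at hℓ; exact absurd hℓ (by simp)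
    set L := ℓ.toReal with hLdef
    have hℓL : ℓ = (L : EReal) := (EReal.coe_toReal hℓtop hℓbot).symm
    have hL0 : 0 < L := by
      have := hℓ
      rw [hℓL] at this
      exact_mod_cast this
    have hLτ : L ≤ τ := by
      have := hℓle
      rw [hℓL] at this
      exact_mod_cast this
    have hLΩ : L ∉ Ω := by
      rw [hΩ]
      rintro ⟨-, h2⟩
      rw [hℓL] at h2
      exact lt_irrefl _ h2
    have hμL : μ L = 0 := hμzero L hL0 hLΩ
    have hρ0 : ∀ᵐ x ∂(volume : Measure ℝ), x ∈ Ioi L → ρ x = 0 := by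
      have h0 : ∫⁻ x in Ioi L, ENNReal.ofReal (ρ x) = 0 := by
        rw [hkey L hL0, hμL, ENNReal.ofReal_zero]
      have h1 := (setLIntegral_eq_zero_iff measurableSet_Ioi hρmeas.ennreal_ofReal).1 h0
      filter_upwards [h1] with x hx hxL
      have := hx hxL
      simp only [Pi.zero_apply, ENNReal.ofReal_eq_zero] at this
      exact le_antisymm this (hρnn x)
    have hzero : ∀ᵐ s ∂(volume.restrict Ω), μ' (τ + s) • φ s = 0 := by
      filter_upwards [key τ (le_trans ht hτt'.le), ae_restrict_of_ae (shift _ hρ0 τ),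
        ae_restrict_mem hΩmeas] with s h1 h2 h3
      have hρz : ρ (τ + s) = 0 := h2 (mem_Ioi.2 (by
        have := hΩsub h3
        rw [mem_Ioi] at this
        linarith))
      rw [h1, hρz, neg_zero, zero_smul]
    calc (∫ s in Ω, μ' (τ + s) • φ s) = ∫ _ in Ω, (0:V) := integral_congr_ae hzero
      _ = 0 := integral_zero _ _
  refine ⟨goal1, goal2, ?_⟩
  rw [hLHS]
  have hstep1 : ∫ τ in Ioi t, ∫ s in Ω, ρ (τ + s) • φ₀ s
      = ∫ τ in Ioi t, A.indicator (fun τ => ∫ s in Ω, ρ (τ + s) • φ₀ s) τ := by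
    apply setIntegral_congr_fun measurableSet_Ioi
    intro τ hτ
    by_cases hA : τ ∈ A
    · rw [indicator_of_mem hA]
    · rw [indicator_of_notMem hA]
      show (∫ s in Ω, ρ (τ + s) • φ₀ s) = 0
      rw [hneg τ hτ, hvanish τ ⟨hτ, hA⟩, neg_zero]
  rw [hstep1, setIntegral_indicator hAmeas,
    inter_eq_right.2 hAsub]
  rw [show (∫ τ in A, ∫ s in Ω, ρ (τ + s) • φ₀ s)
      = ∫ τ in A, -∫ s in Ω, μ' (τ + s) • φ s from
    setIntegral_congr_fun hAmeas fun τ hτ => hneg τ hτ.1]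
  rw [integral_neg]
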